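/- There are exactly 20 finite nonempty multisets R of integers, each at least 2, such that the sum over r in R of (r - 1/r) is strictly less than 15/2, namely: {2}, {3}, {4}, {5}, {6}, {7}, {2,2}, {2,3}, {2,4}, {2,5}, {2,6}, {3,3}, {3,4}, {3,5}, {2,2,2}, {2,2,3}, {2,2,4}, {2,3,3}, {2,2,2,2}, {2,2,2,3}. -/
import Mathlib

set_option maxHeartbeats 1000000 in
theorem basket_enum_q_ge_7 (R : Multiset ℕ) :
    (R ≠ 0 ∧ (∀ r ∈ R, 2 ≤ r) ∧
      (R.map (fun r => (r : ℚ) - 1 / r)).sum < 15 / 2) ↔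
    R ∈ ([{2}, {3}, {4}, {5}, {6}, {7}, {2, 2}, {2, 3}, {2, 4}, {2, 5},
      {2, 6}, {3, 3}, {3, 4}, {3, 5}, {2, 2, 2}, {2, 2, 3}, {2, 2, 4},
      {2, 3, 3}, {2, 2, 2, 2}, {2, 2, 2, 3}] : List (Multiset ℕ)) := by
  constructor
  · rintro ⟨hne, h2, hsum0⟩
    have hsum : (R.map (fun n : ℕ => (n:ℚ) - 1/(n:ℚ))).sum < 15/2 := by
      have he : (R.map (fun r => (r : ℚ) - 1 / r)) =
          R.map (fun n : ℕ => (n:ℚ) - 1/(n:ℚ)) := by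
        simp [Multiset.map_map]
      rwa [he] at hsum0
    clear hsum0
    have hhalf : ∀ r ∈ R, (1:ℚ)/r ≤ 1/2 := by
      intro r hr
      have h2r := h2 r hr
      have : (2:ℚ) ≤ r := by exact_mod_cast h2r
      apply one_div_le_one_div_of_le <;> norm_num <;> linarith
    have hlb : ∀ x ∈ R.map (fun n : ℕ => (n:ℚ) - 1/(n:ℚ)), (3:ℚ)/2 ≤ x := by
      intro x hx
      obtain ⟨r, hr, rfl⟩ := Multiset.mem_map.1 hx
      have h1 := hhalf r hr
      have h2' : (2:ℚ) ≤ r := by exact_mod_cast h2 r hr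
      linarith
    have hc1 : 1 ≤ Multiset.card R := Multiset.card_pos.2 hne
    have key : ∀ r ∈ R,
        (r:ℚ) - 1/r + ((Multiset.card R : ℚ) - 1) * (3/2) < 15/2 := by
      intro r hr
      have hR : R = r ::ₘ R.erase r := (Multiset.cons_erase hr).symm
      rw [hR, Multiset.map_cons, Multiset.sum_cons] at hsum
      have hrest : (Multiset.card (R.erase r) : ℚ) * (3/2) ≤
          ((R.erase r).map (fun n : ℕ => (n:ℚ) - 1/(n:ℚ))).sum := by
        have h := Multiset.card_nsmul_le_sum
          (s := (R.erase r).map (fun n : ℕ => (n:ℚ) - 1/(n:ℚ))) (a := (3:ℚ)/2) ?_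
        · rwa [Multiset.card_map, nsmul_eq_mul] at h
        · intro x hx
          obtain ⟨s, hs, rfl⟩ := Multiset.mem_map.1 hx
          exact hlb _ (Multiset.mem_map_of_mem _ (Multiset.mem_of_mem_erase hs))
      have hce : ((Multiset.card (R.erase r) : ℕ) : ℚ) = (Multiset.card R : ℚ) - 1 := by
        rw [Multiset.card_erase_of_mem hr, Nat.pred_eq_sub_one,
          Nat.cast_sub (by omega), Nat.cast_one]
      rw [hce] at hrest
      linarith
    have hub : ∀ r ∈ R, (r:ℚ) < 15/2 - ((Multiset.card R : ℚ) - 1) * (3/2) + 1/2 := by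
      intro r hr
      have hk := key r hr
      have h1 := hhalf r hr
      linarith
    have hcard : Multiset.card R ≤ 4 := by
      by_contra hc
      push_neg at hc
      obtain ⟨r, hr⟩ := Multiset.exists_mem_of_ne_zero hne
      have hk := key r hr
      have h2' : (2:ℚ) ≤ r := by exact_mod_cast h2 r hr
      have h1 := hhalf r hr
      have h5' : 5 ≤ Multiset.card R := hc
      have h5 : (5:ℚ) ≤ (Multiset.card R : ℚ) := by exact_mod_cast h5'
      linarith
    have hcases : Multiset.card R = 1 ∨ Multiset.card R = 2 ∨
        Multiset.card R = 3 ∨ Multiset.card R = 4 := by omega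
    rcases hcases with h | h | h | h
    · obtain ⟨a, rfl⟩ := Multiset.card_eq_one.1 h
      have ha2 := h2 a (by simp)
      have ha7 : a ≤ 7 := by
        have hb := hub a (by simp)
        rw [h] at hb; push_cast at hb
        have hq : (a:ℚ) < 8 := by linarith
        have : a < 8 := by exact_mod_cast hq
        omega
      interval_cases a <;> decide
    · obtain ⟨a, b, rfl⟩ := Multiset.card_eq_two.1 h
      have ha2 := h2 a (by simp)
      have hb2 := h2 b (by simp)
      have hub' : ∀ r ∈ ({a, b} : Multiset ℕ), r ≤ 6 := by
        intro r hr
        have hbnd := hub r hr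
        rw [h] at hbnd; push_cast at hbnd
        have hq : (r:ℚ) < 7 := by linarith
        have : r < 7 := by exact_mod_cast hq
        omega
      have ha6 := hub' a (by simp)
      have hb6 := hub' b (by simp)
      interval_cases a <;> interval_cases b <;>
        first
          | decide
          | (exfalso
             simp only [Multiset.insert_eq_cons, Multiset.map_cons, Multiset.sum_cons,
               Multiset.map_singleton, Multiset.sum_singleton] at hsum
             norm_num at hsum)
    · obtain ⟨a, b, c, rfl⟩ := Multiset.card_eq_three.1 h
      have ha2 := h2 a (by simp)
      have hb2 := h2 b (by simp)
      have hc2 := h2 c (by simp)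
      have hub' : ∀ r ∈ ({a, b, c} : Multiset ℕ), r ≤ 4 := by
        intro r hr
        have hbnd := hub r hr
        rw [h] at hbnd; push_cast at hbnd
        have hq : (r:ℚ) < 5 := by linarith
        have : r < 5 := by exact_mod_cast hq
        omega
      have ha := hub' a (by simp)
      have hb := hub' b (by simp)
      have hc := hub' c (by simp)
      interval_cases a <;> interval_cases b <;> interval_cases c <;>
        first
          | decide
          | (exfalso
             simp only [Multiset.insert_eq_cons, Multiset.map_cons, Multiset.sum_cons,
               Multiset.map_singleton, Multiset.sum_singleton] at hsum
             norm_num at hsum)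
    · obtain ⟨a, ha⟩ := Multiset.exists_mem_of_ne_zero hne
      obtain ⟨S, rfl⟩ := Multiset.exists_cons_of_mem ha
      have hS : Multiset.card S = 3 := by
        simp [Multiset.card_cons] at h; omega
      obtain ⟨b, c, d, rfl⟩ := Multiset.card_eq_three.1 hS
      have ha2 := h2 a (by simp)
      have hb2 := h2 b (by simp)
      have hc2 := h2 c (by simp)
      have hd2 := h2 d (by simp)
      have hub' : ∀ r ∈ (a ::ₘ ({b, c, d} : Multiset ℕ)), r ≤ 3 := by
        intro r hr
        have hbnd := hub r hr
        rw [h] at hbnd; push_cast at hbnd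
        have hq : (r:ℚ) < 4 := by linarith
        have : r < 4 := by exact_mod_cast hq
        omega
      have ha' := hub' a (by simp)
      have hb' := hub' b (by simp)
      have hc' := hub' c (by simp)
      have hd' := hub' d (by simp)
      interval_cases a <;> interval_cases b <;> interval_cases c <;> interval_cases d <;>
        first
          | decide
          | (exfalso
             simp only [Multiset.insert_eq_cons, Multiset.map_cons, Multiset.sum_cons,
               Multiset.map_singleton, Multiset.sum_singleton] at hsum
             norm_num at hsum)
  · intro h
    fin_cases h <;>
      exact ⟨by decide, by decide, by norm_num [Multiset.map_map]⟩
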